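/- Let d ≥ 1, m ≥ 1, X = [0,1]^d, and let f ∈ C^m(X). Let p_f(x) := exp(f(x))/Z_f be the normalized Gibbs density. Then ‖p_f‖_{C^m} ≤ 2^{m(m−1)/2} · max{1, ‖f‖_{C^m}}^m · (1 + 3·d^{−1/2}·|f|₁)^d. -/

import Mathlib

open MeasureTheory Real

noncomputable section

/-- The unit cube `[0,1]^d` in `ℝ^d`. -/
def cube (d : ℕ) : Set (Fin d → ℝ) := Set.Icc 0 1

/-- Partial derivative of `h` in coordinate direction `i`. -/
def pderivCoord {d : ℕ} (i : Fin d) (h : (Fin d → ℝ) → ℝ) : (Fin d → ℝ) → ℝ :=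
  fun x => deriv (fun t => h (Function.update x i t)) (x i)

/-- Mixed partial derivative `∂^α h` for a multi-index `α ∈ ℕ₀^d`. -/
def pderivMulti {d : ℕ} (α : Fin d → ℕ) (h : (Fin d → ℝ) → ℝ) : (Fin d → ℝ) → ℝ :=
  (List.finRange d).foldr (fun i acc => (pderivCoord i)^[α i] acc) h

/-- The `C^m` norm on the cube:
`‖h‖_{C^m} = sup_{α : |α|₁ ≤ m} sup_{x ∈ [0,1]^d} |∂^α h(x)|`. -/
def CmNorm {d : ℕ} (m : ℕ) (h : (Fin d → ℝ) → ℝ) : ℝ :=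
  ⨆ α : {α : Fin d → ℕ // ∑ i, α i ≤ m}, ⨆ x : cube d, |pderivMulti α.1 h x.1|

/-- The partition function `Z_f = ∫_X exp(f(x)) dx`. -/
def partZ {d : ℕ} (f : (Fin d → ℝ) → ℝ) : ℝ := ∫ x in cube d, Real.exp (f x)

namespace GibbsAux
variable {d : ℕ}

lemma hasDerivAt_update (x : Fin d → ℝ) (i : Fin d) (t : ℝ) :
    HasDerivAt (fun s : ℝ => Function.update x i s) (Pi.single i (1:ℝ)) t := by
  have h1 : (fun s : ℝ => Function.update x i s)
      = fun s : ℝ => Function.update x i 0 + s • (Pi.single i (1:ℝ) : Fin d → ℝ) := by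
    funext s j
    by_cases hj : j = i
    · subst hj; simp
    · simp [Function.update_of_ne hj, Pi.single_eq_of_ne hj]
  rw [h1]
  simpa using ((hasDerivAt_id t).smul_const (Pi.single i (1:ℝ) : Fin d → ℝ)).const_add
    (Function.update x i 0)

lemma hasDerivAt_slice {h : (Fin d → ℝ) → ℝ} {x : Fin d → ℝ} (i : Fin d)
    (hd : DifferentiableAt ℝ h x) :
    HasDerivAt (fun t => h (Function.update x i t)) (pderivCoord i h x) (x i) := by
  have H : HasDerivAt (fun t => h (Function.update x i t))
      (fderiv ℝ h x (Pi.single i 1)) (x i) := by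
    have hfd : HasFDerivAt h (fderiv ℝ h x) (Function.update x i (x i)) := by
      rw [Function.update_eq_self]; exact hd.hasFDerivAt
    exact hfd.comp_hasDerivAt (x i) (hasDerivAt_update x i (x i))
  have he : pderivCoord i h x = fderiv ℝ h x (Pi.single i 1) := H.deriv
  rw [he]; exact H

lemma pderivCoord_eq_fderiv {h : (Fin d → ℝ) → ℝ} (i : Fin d)
    (hd : Differentiable ℝ h) :
    pderivCoord i h = fun x => fderiv ℝ h x (Pi.single i 1) := by
  funext x
  exact (hasDerivAt_slice i (hd x)).deriv.symm.trans (by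
    have H : HasDerivAt (fun t => h (Function.update x i t))
        (fderiv ℝ h x (Pi.single i 1)) (x i) := by
      have hfd : HasFDerivAt h (fderiv ℝ h x) (Function.update x i (x i)) := by
        rw [Function.update_eq_self]; exact hd.differentiableAt.hasFDerivAt
      exact hfd.comp_hasDerivAt (x i) (hasDerivAt_update x i (x i))
    exact H.deriv)

lemma contDiff_pderivCoord {h : (Fin d → ℝ) → ℝ} {n : ℕ} (i : Fin d)
    (hh : ContDiff ℝ ((n + 1 : ℕ) : ℕ∞) h) : ContDiff ℝ (n : ℕ) (pderivCoord i h) := by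
  have hd : Differentiable ℝ h := hh.differentiable (by simp)
  rw [pderivCoord_eq_fderiv i hd]
  have hfd : ContDiff ℝ (n : ℕ) (fderiv ℝ h) := by
    apply hh.fderiv_right
    norm_cast
  exact hfd.clm_apply contDiff_const

lemma contDiff_iter {h : (Fin d → ℝ) → ℝ} (i : Fin d) :
    ∀ (k : ℕ) {n : ℕ}, ContDiff ℝ ((k + n : ℕ) : ℕ∞) h → ContDiff ℝ (n : ℕ) ((pderivCoord i)^[k] h)
  | 0, n, hh => by rw [Nat.zero_add] at hh; exact hh
  | (k+1), n, hh => by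
    rw [Function.iterate_succ_apply]
    refine contDiff_iter i k ?_
    refine contDiff_pderivCoord i ?_
    have he : (k + 1 + n) = ((k + n) + 1) := by omega
    rw [he] at hh; exact hh

/-! ### List-indexed mixed partials and commutation -/

def pdList (l : List (Fin d)) (α : Fin d → ℕ) (h : (Fin d → ℝ) → ℝ) : (Fin d → ℝ) → ℝ :=
  l.foldr (fun i acc => (pderivCoord i)^[α i] acc) h

lemma pderivMulti_eq_pdList (α : Fin d → ℕ) (h : (Fin d → ℝ) → ℝ) :
    pderivMulti α h = pdList (List.finRange d) α h := rfl

lemma pdList_append (l₁ l₂ : List (Fin d)) (α) (h) :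
    pdList (l₁ ++ l₂) α h = pdList l₁ α (pdList l₂ α h) := by
  simp [pdList, List.foldr_append]

lemma pdList_zero (α : Fin d → ℕ) (h) :
    ∀ (l : List (Fin d)), (∀ j ∈ l, α j = 0) → pdList l α h = h
  | [], _ => rfl
  | (j :: l), hz => by
    have h1 : α j = 0 := hz j (List.mem_cons_self)
    show (pderivCoord j)^[α j] (pdList l α h) = h
    rw [h1]
    exact pdList_zero α h l (fun j hj => hz j (List.mem_cons_of_mem _ hj))

lemma pdList_congr (α α' : Fin d → ℕ) (h) :
    ∀ (l : List (Fin d)), (∀ j ∈ l, α j = α' j) → pdList l α h = pdList l α' h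
  | [], _ => rfl
  | (j :: l), he => by
    show (pderivCoord j)^[α j] (pdList l α h) = (pderivCoord j)^[α' j] (pdList l α' h)
    rw [he j (List.mem_cons_self), pdList_congr α α' h l (fun j hj => he j (List.mem_cons_of_mem _ hj))]

lemma finRange_decomp (i : Fin d) :
    ∃ l₁ l₂ : List (Fin d), List.finRange d = l₁ ++ i :: l₂ ∧
      (∀ j ∈ l₁, j < i) ∧ (∀ j ∈ l₂, i < j) := by
  refine ⟨(List.finRange d).take i.val, (List.finRange d).drop (i.val + 1), ?_, ?_, ?_⟩
  · have hlen : i.val < (List.finRange d).length := by simp [i.isLt]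
    conv_lhs => rw [← List.take_append_drop i.val (List.finRange d)]
    congr 1
    rw [List.drop_eq_getElem_cons hlen]
    congr 1
    simp [List.getElem_finRange, Fin.cast]
  · intro j hj
    obtain ⟨k, hk, hkj⟩ := List.mem_take_iff_getElem.mp hj
    have hjv : j.val = k := by rw [← hkj]; simp [List.getElem_finRange]
    refine Fin.lt_def.mpr ?_
    rw [hjv]
    simp at hk
    omega
  · intro j hj
    rw [List.mem_iff_getElem] at hj
    obtain ⟨k, hk, hkj⟩ := hj
    rw [List.getElem_drop] at hkj
    have : j.val = i.val + 1 + k := by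
      rw [← hkj]; simp [List.getElem_finRange, Fin.cast]
    refine Fin.lt_def.mpr ?_
    omega

lemma pderivMulti_add_single {α : Fin d → ℕ} {i : Fin d}
    (hz : ∀ j : Fin d, j < i → α j = 0) (h : (Fin d → ℝ) → ℝ) :
    pderivMulti (α + Pi.single i 1) h = pderivCoord i (pderivMulti α h) := by
  obtain ⟨l₁, l₂, hdec, hl₁, hl₂⟩ := finRange_decomp i
  rw [pderivMulti_eq_pdList, pderivMulti_eq_pdList, hdec, pdList_append, pdList_append]
  have hz₁ : ∀ j ∈ l₁, (α + Pi.single i 1 : Fin d → ℕ) j = 0 := by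
    intro j hj
    have hji : j ≠ i := ne_of_lt (hl₁ j hj)
    simp [Pi.add_apply, Pi.single_eq_of_ne hji, hz j (hl₁ j hj)]
  have hz₁' : ∀ j ∈ l₁, α j = 0 := fun j hj => hz j (hl₁ j hj)
  rw [pdList_zero _ _ _ hz₁, pdList_zero _ _ _ hz₁']
  show (pderivCoord i)^[(α + Pi.single i 1 : Fin d → ℕ) i] (pdList l₂ (α + Pi.single i 1) h)
      = pderivCoord i ((pderivCoord i)^[α i] (pdList l₂ α h))
  have he2 : pdList l₂ (α + Pi.single i 1) h = pdList l₂ α h := by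
    refine pdList_congr _ _ _ _ ?_
    intro j hj
    have hji : j ≠ i := ne_of_gt (hl₂ j hj)
    simp [Pi.single_eq_of_ne hji]
  rw [he2]
  have : (α + Pi.single i 1 : Fin d → ℕ) i = α i + 1 := by simp
  rw [this, Function.iterate_succ_apply']

/-! ### Combinatorial bookkeeping -/

section Engine

variable (f : (Fin d → ℝ) → ℝ)

/-- value of a list of lists of multi-indices -/
def valT (T : List (List (Fin d → ℕ))) (x : Fin d → ℝ) : ℝ :=
  (T.map fun P => (P.map fun β => pderivMulti β f x).prod).sum

def bump (i : Fin d) : List (Fin d → ℕ) → List (List (Fin d → ℕ))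
  | [] => []
  | β :: P => ((β + Pi.single i 1) :: P) :: (bump i P).map (β :: ·)

def stepT (i : Fin d) (T : List (List (Fin d → ℕ))) : List (List (Fin d → ℕ)) :=
  T.flatMap fun P => (Pi.single i 1 :: P) :: bump i P

/-- invariant: `k` differentiations so far, all supports in coordinates `≥ i` -/
def GoodT (k : ℕ) (i : ℕ) (T : List (List (Fin d → ℕ))) : Prop :=
  T.length ≤ k.factorial ∧ ∀ P ∈ T, P.length ≤ k ∧ ∀ β ∈ P,
    (1 ≤ ∑ j, β j) ∧ (∑ j, β j ≤ k) ∧ ∀ j : Fin d, (j : ℕ) < i → β j = 0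

lemma goodT_mono {k i i' : ℕ} {T : List (List (Fin d → ℕ))} (hii : i' ≤ i)
    (hT : GoodT k i T) : GoodT k i' T := by
  refine ⟨hT.1, fun P hP => ⟨(hT.2 P hP).1, fun β hβ => ?_⟩⟩
  obtain ⟨h1, h2, h3⟩ := (hT.2 P hP).2 β hβ
  exact ⟨h1, h2, fun j hj => h3 j (lt_of_lt_of_le hj hii)⟩

lemma goodT_le {k k' i : ℕ} {T : List (List (Fin d → ℕ))} (hkk : k ≤ k')
    (hT : GoodT k i T) : GoodT k' i T := by
  refine ⟨le_trans hT.1 (Nat.factorial_le hkk), fun P hP => ⟨le_trans (hT.2 P hP).1 hkk, fun β hβ => ?_⟩⟩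
  obtain ⟨h1, h2, h3⟩ := (hT.2 P hP).2 β hβ
  exact ⟨h1, le_trans h2 hkk, h3⟩

lemma sum_single (i : Fin d) : (∑ j, (Pi.single i 1 : Fin d → ℕ) j) = 1 := by
  simp

lemma sum_add_single (β : Fin d → ℕ) (i : Fin d) :
    (∑ j, (β + Pi.single i 1 : Fin d → ℕ) j) = (∑ j, β j) + 1 := by
  simp [Finset.sum_add_distrib]

lemma bump_length (i : Fin d) : ∀ (P : List (Fin d → ℕ)), (bump i P).length = P.length
  | [] => rfl
  | β :: P => by simp [bump, bump_length i P]

lemma mem_bump (i : Fin d) : ∀ (P Q : List (Fin d → ℕ)), Q ∈ bump i P →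
    Q.length = P.length ∧ ∀ γ ∈ Q, γ ∈ P ∨ ∃ β ∈ P, γ = β + Pi.single i 1
  | [], Q, hQ => by simp [bump] at hQ
  | β :: P, Q, hQ => by
    simp only [bump, List.mem_cons, List.mem_map] at hQ
    rcases hQ with rfl | ⟨Q', hQ', rfl⟩
    · refine ⟨by simp, ?_⟩
      intro γ hγ
      rcases List.mem_cons.mp hγ with rfl | hγ
      · exact Or.inr ⟨β, List.mem_cons_self, rfl⟩
      · exact Or.inl (List.mem_cons_of_mem _ hγ)
    · obtain ⟨hlen, helt⟩ := mem_bump i P Q' hQ'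
      refine ⟨by simp [hlen], ?_⟩
      intro γ hγ
      rcases List.mem_cons.mp hγ with rfl | hγ
      · exact Or.inl (List.mem_cons_self)
      · rcases helt γ hγ with h | ⟨β', hβ', rfl⟩
        · exact Or.inl (List.mem_cons_of_mem _ h)
        · exact Or.inr ⟨β', List.mem_cons_of_mem _ hβ', rfl⟩

lemma stepT_length (i : Fin d) {k : ℕ} : ∀ (T : List (List (Fin d → ℕ))),
    (∀ P ∈ T, P.length ≤ k) → (stepT i T).length ≤ T.length * (k + 1)
  | [], _ => by simp [stepT]
  | P :: T, hT => by
    have h1 : (stepT i (P :: T)) = ((Pi.single i 1 :: P) :: bump i P) ++ stepT i T := by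
      simp [stepT]
    rw [h1, List.length_append]
    have h2 := stepT_length i T (fun P hP => hT P (List.mem_cons_of_mem _ hP))
    have h3 : P.length ≤ k := hT P (List.mem_cons_self)
    have h4 : ((Pi.single i 1 :: P) :: bump i P).length = 1 + P.length := by
      simp [bump_length]; omega
    have h5 : (P :: T).length = T.length + 1 := by simp
    rw [h4, h5]
    nlinarith

lemma goodT_step {k i₀ : ℕ} {i : Fin d} {T : List (List (Fin d → ℕ))}
    (hi : i₀ ≤ (i : ℕ)) (hT : GoodT k i₀ T) : GoodT (k + 1) i₀ (stepT i T) := by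
  obtain ⟨hlen, helt⟩ := hT
  constructor
  · calc (stepT i T).length ≤ T.length * (k + 1) :=
          stepT_length i T (fun P hP => (helt P hP).1)
      _ ≤ k.factorial * (k + 1) := by exact Nat.mul_le_mul_right _ hlen
      _ = (k+1).factorial := by rw [Nat.factorial_succ]; ring
  · intro P' hP'
    rw [stepT, List.mem_flatMap] at hP'
    obtain ⟨P, hP, hP'⟩ := hP'
    obtain ⟨hPlen, hPβ⟩ := helt P hP
    have hsingle : (1 ≤ ∑ j, (Pi.single i 1 : Fin d → ℕ) j) ∧
        (∑ j, (Pi.single i 1 : Fin d → ℕ) j ≤ k + 1) ∧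
        ∀ j : Fin d, (j : ℕ) < i₀ → (Pi.single i 1 : Fin d → ℕ) j = 0 := by
      refine ⟨by rw [sum_single], by rw [sum_single]; omega, fun j hj => ?_⟩
      have : j ≠ i := by
        intro hji; subst hji; omega
      simp [Pi.single_eq_of_ne this]
    rcases List.mem_cons.mp hP' with rfl | hP'
    · refine ⟨by simp; omega, ?_⟩
      intro β hβ
      rcases List.mem_cons.mp hβ with rfl | hβ
      · exact hsingle
      · obtain ⟨h1, h2, h3⟩ := hPβ β hβ
        exact ⟨h1, by omega, h3⟩
    · obtain ⟨hQlen, hQelt⟩ := mem_bump i P P' hP'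
      refine ⟨by omega, ?_⟩
      intro γ hγ
      rcases hQelt γ hγ with h | ⟨β, hβ, rfl⟩
      · obtain ⟨h1, h2, h3⟩ := hPβ γ h
        exact ⟨h1, by omega, h3⟩
      · obtain ⟨h1, h2, h3⟩ := hPβ β hβ
        refine ⟨?_, ?_, ?_⟩
        · rw [sum_add_single]; omega
        · rw [sum_add_single]; omega
        · intro j hj
          have hji : j ≠ i := by intro hji; subst hji; omega
          simp [Pi.add_apply, Pi.single_eq_of_ne hji, h3 j hj]

end Engine

section Analytic

variable {m : ℕ} {f : (Fin d → ℝ) → ℝ}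

lemma contDiff_pdList (α : Fin d → ℕ) :
    ∀ (l : List (Fin d)) (h : (Fin d → ℝ) → ℝ) (n : ℕ),
      ContDiff ℝ (((l.map α).sum + n : ℕ) : ℕ∞) h → ContDiff ℝ (n : ℕ) (pdList l α h)
  | [], h, n, hh => by simpa [pdList] using hh
  | j :: l, h, n, hh => by
    show ContDiff ℝ (n : ℕ) ((pderivCoord j)^[α j] (pdList l α h))
    refine contDiff_iter j (α j) ?_
    refine contDiff_pdList α l h (α j + n) ?_
    have he : ((l.map α).sum + (α j + n)) = (((j :: l).map α).sum + n) := by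
      simp [List.map_cons]; omega
    rw [he]
    exact hh

lemma contDiff_pderivMulti (hf : ContDiff ℝ (m : ℕ∞) f) (β : Fin d → ℕ)
    (hβ : ∑ j, β j ≤ m) : ContDiff ℝ ((m - ∑ j, β j : ℕ) : ℕ∞) (pderivMulti β f) := by
  rw [pderivMulti_eq_pdList]
  refine contDiff_pdList β (List.finRange d) f (m - ∑ j, β j) ?_
  have he : (((List.finRange d).map β).sum + (m - ∑ j, β j)) = m := by
    rw [← Fin.sum_univ_def]; omega
  rw [he]
  exact hf

lemma diff_pderivMulti (hf : ContDiff ℝ (m : ℕ∞) f) (β : Fin d → ℕ)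
    (hβ : ∑ j, β j < m) : Differentiable ℝ (pderivMulti β f) := by
  refine (contDiff_pderivMulti hf β (le_of_lt hβ)).differentiable ?_
  exact_mod_cast (by omega : m - ∑ j, β j ≠ 0)

lemma cont_pderivMulti (hf : ContDiff ℝ (m : ℕ∞) f) (β : Fin d → ℕ)
    (hβ : ∑ j, β j ≤ m) : Continuous (pderivMulti β f) :=
  (contDiff_pderivMulti hf β hβ).continuous

lemma hasDerivAt_slice_pdM (hf : ContDiff ℝ (m : ℕ∞) f) {β : Fin d → ℕ} {i : Fin d}
    (hβ : ∑ j, β j < m) (hsupp : ∀ j : Fin d, (j : ℕ) < i.val → β j = 0) (x : Fin d → ℝ) :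
    HasDerivAt (fun t => pderivMulti β f (Function.update x i t))
      (pderivMulti (β + Pi.single i 1) f x) (x i) := by
  rw [pderivMulti_add_single (fun j hj => hsupp j (Fin.lt_def.mp hj))]
  exact hasDerivAt_slice i ((diff_pderivMulti hf β hβ) x)

lemma hasDerivAt_prodP (hf : ContDiff ℝ (m : ℕ∞) f) (i : Fin d) (x : Fin d → ℝ) :
    ∀ (P : List (Fin d → ℕ)),
      (∀ β ∈ P, (∑ j, β j < m) ∧ ∀ j : Fin d, (j : ℕ) < i.val → β j = 0) →
      HasDerivAt (fun t => (P.map fun β => pderivMulti β f (Function.update x i t)).prod)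
        (((bump i P).map fun Q => (Q.map fun β => pderivMulti β f x).prod).sum) (x i)
  | [], _ => by simpa [bump] using hasDerivAt_const (x i) (1:ℝ)
  | β :: P, hP => by
    have h1 := hasDerivAt_slice_pdM hf (hP β (List.mem_cons_self)).1
      (hP β (List.mem_cons_self)).2 x
    have h2 := hasDerivAt_prodP hf i x P (fun γ hγ => hP γ (List.mem_cons_of_mem _ hγ))
    have h3 := h1.mul h2
    have hfun : (fun t => (((β :: P)).map fun γ => pderivMulti γ f (Function.update x i t)).prod)
        = fun t => pderivMulti β f (Function.update x i t) *
            (P.map fun γ => pderivMulti γ f (Function.update x i t)).prod := by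
      funext t; simp
    rw [hfun]
    refine h3.congr_deriv ?_
    symm
    simp only [bump, List.map_cons, List.prod_cons, List.sum_cons, List.map_map,
      Function.update_eq_self]
    have hcomp : ((bump i P).map ((fun Q => (Q.map fun γ => pderivMulti γ f x).prod) ∘ (β :: ·))).sum
        = pderivMulti β f x * ((bump i P).map fun Q => (Q.map fun γ => pderivMulti γ f x).prod).sum := by
      rw [← List.sum_map_mul_left]
      congr 1
    rw [hcomp]

lemma hasDerivAt_valT (hf : ContDiff ℝ (m : ℕ∞) f) (i : Fin d) (x : Fin d → ℝ) :
    ∀ (T : List (List (Fin d → ℕ))),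
      (∀ P ∈ T, ∀ β ∈ P, (∑ j, β j < m) ∧ ∀ j : Fin d, (j : ℕ) < i.val → β j = 0) →
      HasDerivAt (fun t => valT f T (Function.update x i t))
        (valT f (T.flatMap (bump i)) x) (x i)
  | [], _ => by simpa [valT] using hasDerivAt_const (x i) (0:ℝ)
  | P :: T, hT => by
    have h1 := hasDerivAt_prodP hf i x P (hT P (List.mem_cons_self))
    have h2 := hasDerivAt_valT hf i x T (fun Q hQ => hT Q (List.mem_cons_of_mem _ hQ))
    have h3 := h1.add h2
    have hfun : (fun t => valT f (P :: T) (Function.update x i t))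
        = fun t => (P.map fun β => pderivMulti β f (Function.update x i t)).prod
            + valT f T (Function.update x i t) := by
      funext t; simp [valT]
    rw [hfun]
    refine h3.congr_deriv ?_
    symm
    simp [valT, List.flatMap_cons, List.map_append, List.sum_append]

lemma pderivMulti_zero (h : (Fin d → ℝ) → ℝ) : pderivMulti (0 : Fin d → ℕ) h = h := by
  rw [pderivMulti_eq_pdList]
  exact pdList_zero _ _ _ (fun j _ => rfl)

lemma pderivMulti_single (i : Fin d) (h : (Fin d → ℝ) → ℝ) :
    pderivMulti (Pi.single i 1) h = pderivCoord i h := by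
  have := pderivMulti_add_single (α := (0 : Fin d → ℕ)) (i := i) (fun j _ => rfl) h
  rw [zero_add, pderivMulti_zero] at this
  exact this

lemma hasDerivAt_exp_slice (hf : ContDiff ℝ (m : ℕ∞) f) (hm : 1 ≤ m) (i : Fin d)
    (x : Fin d → ℝ) :
    HasDerivAt (fun t => Real.exp (f (Function.update x i t)))
      (Real.exp (f x) * pderivMulti (Pi.single i 1) f x) (x i) := by
  have hdf : DifferentiableAt ℝ f x :=
    (hf.differentiable (by exact_mod_cast (by omega : m ≠ 0))) x
  have h1 := (hasDerivAt_slice i hdf).exp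
  rw [Function.update_eq_self] at h1
  rw [pderivMulti_single]
  exact h1

lemma valT_append (f : (Fin d → ℝ) → ℝ) (A B : List (List (Fin d → ℕ))) (x : Fin d → ℝ) :
    valT f (A ++ B) x = valT f A x + valT f B x := by
  simp [valT]

lemma valT_cons (f : (Fin d → ℝ) → ℝ) (P : List (Fin d → ℕ)) (T : List (List (Fin d → ℕ)))
    (x : Fin d → ℝ) :
    valT f (P :: T) x = (P.map fun β => pderivMulti β f x).prod + valT f T x := by
  simp [valT]

lemma valT_step (f : (Fin d → ℝ) → ℝ) (i : Fin d) (x : Fin d → ℝ) :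
    ∀ (T : List (List (Fin d → ℕ))),
      valT f (stepT i T) x = pderivMulti (Pi.single i 1) f x * valT f T x
        + valT f (T.flatMap (bump i)) x
  | [] => by simp [stepT, valT]
  | P :: T => by
    have h1 : stepT i (P :: T) = ((Pi.single i 1 :: P) :: bump i P) ++ stepT i T := by
      simp [stepT]
    rw [h1, valT_append, valT_cons, valT_step f i x T, List.flatMap_cons, valT_append,
      valT_cons]
    simp only [List.map_cons, List.prod_cons]
    ring

lemma step_spec (hf : ContDiff ℝ (m : ℕ∞) f) (hm : 1 ≤ m) (i : Fin d) {k : ℕ} (hk : k < m)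
    (T : List (List (Fin d → ℕ))) (hT : GoodT k i.val T) :
    pderivCoord i (fun x => valT f T x * Real.exp (f x))
      = fun x => valT f (stepT i T) x * Real.exp (f x) := by
  funext x
  have hTcond : ∀ P ∈ T, ∀ β ∈ P, (∑ j, β j < m) ∧ ∀ j : Fin d, (j : ℕ) < i.val → β j = 0 := by
    intro P hP β hβ
    obtain ⟨h1, h2, h3⟩ := (hT.2 P hP).2 β hβ
    exact ⟨lt_of_le_of_lt h2 hk, h3⟩
  have h1 := hasDerivAt_valT hf i x T hTcond
  have h2 := hasDerivAt_exp_slice hf hm i x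
  have h3 := h1.mul h2
  show deriv (fun t => valT f T (Function.update x i t) * Real.exp (f (Function.update x i t))) (x i) = _
  rw [show (fun t => valT f T (Function.update x i t) * Real.exp (f (Function.update x i t))) = ((fun t => valT f T (Function.update x i t)) * fun t => Real.exp (f (Function.update x i t))) from rfl, h3.deriv, valT_step]
  simp only [Function.update_eq_self]
  ring

lemma iter_spec (hf : ContDiff ℝ (m : ℕ∞) f) (hm : 1 ≤ m) (i : Fin d) :
    ∀ (n : ℕ) {k : ℕ} (T : List (List (Fin d → ℕ))), GoodT k i.val T → k + n ≤ m →
      ∃ T', GoodT (k + n) i.val T' ∧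
        (pderivCoord i)^[n] (fun x => valT f T x * Real.exp (f x))
          = fun x => valT f T' x * Real.exp (f x)
  | 0, k, T, hT, _ => ⟨T, hT, rfl⟩
  | n + 1, k, T, hT, hkn => by
    obtain ⟨T', hT', he⟩ := iter_spec hf hm i n T hT (by omega)
    refine ⟨stepT i T', goodT_step (le_refl _) hT', ?_⟩
    rw [Function.iterate_succ_apply', he]
    exact step_spec hf hm i (by omega) T' hT'

end Analytic

section Construct

variable {m : ℕ} {f : (Fin d → ℝ) → ℝ}

def headBound : List (Fin d) → ℕ
  | [] => d
  | j :: _ => j.val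

lemma pdList_spec (hf : ContDiff ℝ (m : ℕ∞) f) (hm : 1 ≤ m) (α : Fin d → ℕ) :
    ∀ (l : List (Fin d)), l.Pairwise (· < ·) → (l.map α).sum ≤ m →
      ∃ T, GoodT ((l.map α).sum) (headBound l) T ∧
        pdList l α (fun x => Real.exp (f x)) = fun x => valT f T x * Real.exp (f x)
  | [], _, _ => by
    refine ⟨[[]], ?_, ?_⟩
    · exact ⟨by simp, by simp⟩
    · funext x
      simp [pdList, valT]
  | j :: l, hp, hs => by
    have hp' : l.Pairwise (· < ·) := hp.of_cons
    have hs' : (l.map α).sum ≤ m := by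
      simp only [List.map_cons, List.sum_cons] at hs; omega
    obtain ⟨T, hT, he⟩ := pdList_spec hf hm α l hp' hs'
    have hhead : (headBound l : ℕ) ≥ j.val := by
      cases l with
      | nil => exact le_of_lt j.isLt
      | cons j' l' =>
        have hjj : j < j' := (List.pairwise_cons.mp hp).1 j' (List.mem_cons_self)
        show j'.val ≥ j.val
        exact le_of_lt (Fin.lt_def.mp hjj)
    have hT' : GoodT ((l.map α).sum) j.val T := goodT_mono hhead hT
    have hsum : (l.map α).sum + α j ≤ m := by
      simp only [List.map_cons, List.sum_cons] at hs; omega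
    obtain ⟨T', hT', he'⟩ := iter_spec hf hm j (α j) T hT' hsum
    refine ⟨T', ?_, ?_⟩
    · have : ((j :: l).map α).sum = (l.map α).sum + α j := by
        simp [List.map_cons]; omega
      rw [this]
      exact hT'
    · show (pderivCoord j)^[α j] (pdList l α (fun x => Real.exp (f x))) = _
      rw [he, he']

lemma pderivMulti_exp_spec (hf : ContDiff ℝ (m : ℕ∞) f) (hm : 1 ≤ m) (α : Fin d → ℕ)
    (hα : ∑ j, α j ≤ m) :
    ∃ T, GoodT (∑ j, α j) 0 T ∧
      pderivMulti α (fun x => Real.exp (f x)) = fun x => valT f T x * Real.exp (f x) := by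
  have hsum : ((List.finRange d).map α).sum = ∑ j, α j := (Fin.sum_univ_def α).symm
  obtain ⟨T, hT, he⟩ := pdList_spec hf hm α (List.finRange d)
    (List.pairwise_lt_finRange d) (by rw [hsum]; exact hα)
  refine ⟨T, ?_, ?_⟩
  · rw [← hsum]
    exact goodT_mono (Nat.zero_le _) hT
  · rw [pderivMulti_eq_pdList, he]

end Construct

/-! ### Division by a constant -/

lemma pderivCoord_div_const (i : Fin d) (g : (Fin d → ℝ) → ℝ) (c : ℝ) :
    pderivCoord i (fun x => g x / c) = fun x => pderivCoord i g x / c := by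
  funext x
  show deriv (fun t => g (Function.update x i t) / c) (x i) = _
  rw [deriv_div_const]
  rfl

lemma iter_pderivCoord_div_const (i : Fin d) (c : ℝ) :
    ∀ (n : ℕ) (g : (Fin d → ℝ) → ℝ),
      (pderivCoord i)^[n] (fun x => g x / c) = fun x => (pderivCoord i)^[n] g x / c
  | 0, g => rfl
  | n + 1, g => by
    rw [Function.iterate_succ_apply', Function.iterate_succ_apply',
      iter_pderivCoord_div_const i c n g, pderivCoord_div_const]

lemma pdList_div_const (α : Fin d → ℕ) (c : ℝ) :
    ∀ (l : List (Fin d)) (g : (Fin d → ℝ) → ℝ),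
      pdList l α (fun x => g x / c) = fun x => pdList l α g x / c
  | [], g => rfl
  | j :: l, g => by
    show (pderivCoord j)^[α j] (pdList l α (fun x => g x / c)) = _
    rw [pdList_div_const α c l g, iter_pderivCoord_div_const]
    rfl

lemma pderivMulti_div_const (α : Fin d → ℕ) (g : (Fin d → ℝ) → ℝ) (c : ℝ) :
    pderivMulti α (fun x => g x / c) = fun x => pderivMulti α g x / c := by
  rw [pderivMulti_eq_pdList, pdList_div_const, pderivMulti_eq_pdList]

/-! ### Bounds -/

section Bounds

variable {m : ℕ} {f : (Fin d → ℝ) → ℝ}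

instance finiteMI (m : ℕ) : Finite {α : Fin d → ℕ // ∑ i, α i ≤ m} := by
  refine Finite.of_injective (fun a => (fun i => (⟨a.1 i, ?_⟩ : Fin (m+1)) : Fin d → Fin (m+1)))
    ?_
  · have h1 : a.1 i ≤ ∑ j, a.1 j :=
      Finset.single_le_sum (fun j _ => Nat.zero_le _) (Finset.mem_univ i)
    omega
  · intro a b hab
    apply Subtype.ext
    funext i
    have := congr_fun hab i
    simpa [Fin.mk.injEq] using this

lemma cube_nonempty : (cube d).Nonempty := by
  refine ⟨0, ?_⟩
  constructor
  · exact le_refl _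
  · intro i; norm_num

instance : Nonempty (cube d) := Set.Nonempty.to_subtype cube_nonempty

instance : Nonempty {α : Fin d → ℕ // ∑ i, α i ≤ m} :=
  ⟨⟨0, by simp⟩⟩

lemma bddAbove_inner (hf : ContDiff ℝ (m : ℕ∞) f) (β : Fin d → ℕ) (hβ : ∑ j, β j ≤ m) :
    BddAbove (Set.range fun x : cube d => |pderivMulti β f x.1|) := by
  have hc : ContinuousOn (fun y => |pderivMulti β f y|) (cube d) :=
    ((cont_pderivMulti hf β hβ).abs).continuousOn
  have h1 : (Set.range fun x : cube d => |pderivMulti β f x.1|)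
      = (fun y => |pderivMulti β f y|) '' cube d := by
    rw [show (fun x : cube d => |pderivMulti β f x.1|)
        = (fun y => |pderivMulti β f y|) ∘ (Subtype.val) from rfl,
      Set.range_comp, Subtype.range_coe]
  rw [h1]
  exact IsCompact.bddAbove_image isCompact_Icc hc

lemma pderivMulti_le_CmNorm (hf : ContDiff ℝ (m : ℕ∞) f) (β : Fin d → ℕ)
    (hβ : ∑ j, β j ≤ m) {x : Fin d → ℝ} (hx : x ∈ cube d) :
    |pderivMulti β f x| ≤ CmNorm m f := by
  have h1 : |pderivMulti β f x| ≤ ⨆ y : cube d, |pderivMulti β f y.1| :=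
    le_ciSup (bddAbove_inner hf β hβ) (⟨x, hx⟩ : cube d)
  refine le_trans h1 ?_
  have h2 : BddAbove (Set.range fun α : {α : Fin d → ℕ // ∑ i, α i ≤ m} =>
      ⨆ y : cube d, |pderivMulti α.1 f y.1|) :=
    Set.Finite.bddAbove (Set.finite_range _)
  exact le_ciSup h2 (⟨β, hβ⟩ : {α : Fin d → ℕ // ∑ i, α i ≤ m})

lemma abs_list_sum : ∀ (L : List ℝ), |L.sum| ≤ (L.map (fun t => |t|)).sum
  | [] => by simp
  | t :: L => by
    simp only [List.sum_cons, List.map_cons]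
    exact le_trans (abs_add_le _ _) (by linarith [abs_list_sum L])

lemma list_prod_le_pow {M : ℝ} (hM : 1 ≤ M) (g : (Fin d → ℕ) → ℝ) :
    ∀ (P : List (Fin d → ℕ)) (k : ℕ), (∀ β ∈ P, |g β| ≤ M) → P.length ≤ k →
      |(P.map g).prod| ≤ M ^ k
  | [], k, _, _ => by
    simp only [List.map_nil, List.prod_nil, abs_one]
    exact one_le_pow₀ hM
  | β :: P, k, hg, hk => by
    have hk1 : 1 ≤ k := by simp at hk; omega
    obtain ⟨k', rfl⟩ : ∃ k', k = k' + 1 := ⟨k - 1, by omega⟩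
    simp only [List.map_cons, List.prod_cons, abs_mul]
    have h1 : |g β| ≤ M := hg β (List.mem_cons_self)
    have h2 : |(P.map g).prod| ≤ M ^ k' :=
      list_prod_le_pow hM g P k' (fun γ hγ => hg γ (List.mem_cons_of_mem _ hγ))
        (by simp at hk; omega)
    calc |g β| * |(P.map g).prod| ≤ M * M ^ k' := by
          apply mul_le_mul h1 h2 (abs_nonneg _) (le_trans zero_le_one hM)
      _ = M ^ (k' + 1) := by ring

lemma list_sum_le_card_mul {C : ℝ} (hC : 0 ≤ C) (w : List (Fin d → ℕ) → ℝ) :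
    ∀ (T : List (List (Fin d → ℕ))), (∀ P ∈ T, w P ≤ C) →
      (T.map w).sum ≤ T.length * C
  | [], _ => by simp
  | P :: T, hw => by
    simp only [List.map_cons, List.sum_cons, List.length_cons]
    have h1 := hw P (List.mem_cons_self)
    have h2 := list_sum_le_card_mul hC w T (fun Q hQ => hw Q (List.mem_cons_of_mem _ hQ))
    push_cast
    nlinarith [h2]

lemma valT_bound (hf : ContDiff ℝ (m : ℕ∞) f) {x : Fin d → ℝ} (hx : x ∈ cube d)
    {T : List (List (Fin d → ℕ))} {k : ℕ} (hT : GoodT k 0 T) (hk : k ≤ m) :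
    |valT f T x| ≤ (k.factorial : ℝ) * max 1 (CmNorm m f) ^ k := by
  set M := max 1 (CmNorm m f) with hMdef
  have hM1 : (1:ℝ) ≤ M := le_max_left _ _
  have hstep : ∀ P ∈ T, |(P.map fun β => pderivMulti β f x).prod| ≤ M ^ k := by
    intro P hP
    refine list_prod_le_pow hM1 _ P k ?_ (hT.2 P hP).1
    intro β hβ
    obtain ⟨h1, h2, _⟩ := (hT.2 P hP).2 β hβ
    exact le_trans (pderivMulti_le_CmNorm hf β (le_trans h2 hk) hx) (le_max_right _ _)
  calc |valT f T x| ≤ ((T.map fun P => (P.map fun β => pderivMulti β f x).prod).map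
          (fun t => |t|)).sum := abs_list_sum _
    _ = (T.map fun P => |(P.map fun β => pderivMulti β f x).prod|).sum := by
        rw [List.map_map]; rfl
    _ ≤ T.length * M ^ k := list_sum_le_card_mul
        (le_trans zero_le_one (one_le_pow₀ hM1)) _ T hstep
    _ ≤ (k.factorial : ℝ) * M ^ k := by
        have := hT.1
        have hMk : (0:ℝ) ≤ M ^ k := le_trans zero_le_one (one_le_pow₀ hM1)
        have : (T.length : ℝ) ≤ (k.factorial : ℝ) := by exact_mod_cast hT.1
        nlinarith

lemma factorial_le_two_pow : ∀ (m : ℕ), m.factorial ≤ 2 ^ (m * (m - 1) / 2)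
  | 0 => by simp
  | (m+1) => by
    have h1 : (m + 1) * (m + 1 - 1) / 2 = m * (m - 1) / 2 + m := by
      calc (m + 1) * (m + 1 - 1) / 2 = (m+1).choose 2 := (Nat.choose_two_right (m+1)).symm
        _ = m.choose 2 + m := by
            have h := Nat.choose_succ_succ m 1
            norm_num at h
            omega
        _ = m * (m - 1) / 2 + m := by rw [Nat.choose_two_right]
    calc (m+1).factorial = (m+1) * m.factorial := rfl
      _ ≤ (m+1) * 2 ^ (m * (m-1) / 2) := Nat.mul_le_mul_left _ (factorial_le_two_pow m)
      _ ≤ 2 ^ m * 2 ^ (m * (m-1) / 2) :=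
          Nat.mul_le_mul_right _ (Nat.succ_le_of_lt Nat.lt_two_pow_self)
      _ = 2 ^ (m * (m-1) / 2 + m) := by rw [← pow_add, Nat.add_comm]
      _ = 2 ^ ((m + 1) * (m + 1 - 1) / 2) := by rw [h1]

end Bounds

/-! ### Lower bound on the partition function -/

lemma exp_le_one_add_two_mul {t : ℝ} (h0 : 0 ≤ t) (h1 : t ≤ 1) : Real.exp t ≤ 1 + 2 * t := by
  have h := convexOn_exp.2 (Set.mem_univ (0:ℝ)) (Set.mem_univ 1) (by linarith : (0:ℝ) ≤ 1 - t) h0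
    (by ring)
  simp only [smul_eq_mul, mul_zero, mul_one, zero_add, Real.exp_zero] at h
  have he : Real.exp 1 < 2.7182818286 := Real.exp_one_lt_d9
  nlinarith [h]

lemma exp_le_partZ_mul {f : (Fin d → ℝ) → ℝ} (hd : 1 ≤ d) (hc : Continuous f)
    {K : ℝ} (hK : 0 ≤ K)
    (hLip : ∀ x ∈ cube d, ∀ y ∈ cube d,
      |f x - f y| ≤ K * Real.sqrt (∑ i, (x i - y i) ^ 2))
    {x : Fin d → ℝ} (hx : x ∈ cube d) :
    Real.exp (f x) ≤ partZ f * (1 + 3 * (K / Real.sqrt d)) ^ d ∧ 0 < partZ f := by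
  have hdR : (0:ℝ) < d := by exact_mod_cast hd
  have hd0 : (0:ℝ) < Real.sqrt d := Real.sqrt_pos.mpr hdR
  set a : ℝ := K / Real.sqrt d with ha_def
  have ha : 0 ≤ a := div_nonneg hK hd0.le
  have ha1 : (0:ℝ) < 1 + a := by linarith
  set s : ℝ := 1 / (1 + a) with hs_def
  have hs0 : 0 < s := by positivity
  have hs1 : s ≤ 1 := by
    rw [hs_def, div_le_one ha1]; linarith
  set lo : Fin d → ℝ := fun j => min (x j) (1 - s) with hlo_def
  set hi : Fin d → ℝ := fun j => lo j + s with hhi_def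
  have hx0 : ∀ j, 0 ≤ x j := fun j => hx.1 j
  have hx1 : ∀ j, x j ≤ 1 := fun j => hx.2 j
  have hlohi : lo ≤ hi := fun j => by simp [hhi_def]; linarith
  have hsub : Set.Icc lo hi ⊆ cube d := by
    intro y hy
    constructor
    · intro j
      have h1 : lo j ≤ y j := hy.1 j
      have h2 : 0 ≤ lo j := le_min (hx0 j) (by linarith)
      exact le_trans h2 h1
    · intro j
      have h1 : y j ≤ hi j := hy.2 j
      have h2 : hi j ≤ 1 := by
        have : lo j ≤ 1 - s := min_le_right _ _
        simp only [hhi_def]; linarith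
      exact le_trans h1 h2
  have hdist : ∀ y ∈ Set.Icc lo hi, Real.sqrt (∑ j, (x j - y j) ^ 2) ≤ Real.sqrt d * s := by
    intro y hy
    have hsum : ∑ j, (x j - y j) ^ 2 ≤ (d : ℝ) * s ^ 2 := by
      calc ∑ j, (x j - y j) ^ 2 ≤ ∑ _j : Fin d, s ^ 2 := by
            refine Finset.sum_le_sum ?_
            intro j _
            have h1 : lo j ≤ y j := hy.1 j
            have h2 : y j ≤ lo j + s := hy.2 j
            have h3 : x j - s ≤ lo j := le_min (by linarith) (by linarith [hx1 j])
            have h4 : lo j ≤ x j := min_le_left _ _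
            refine sq_le_sq' (by linarith) (by linarith)
        _ = (d : ℝ) * s ^ 2 := by
            rw [Finset.sum_const, Finset.card_univ, Fintype.card_fin, nsmul_eq_mul]
    calc Real.sqrt (∑ j, (x j - y j) ^ 2) ≤ Real.sqrt ((d:ℝ) * s ^ 2) :=
          Real.sqrt_le_sqrt hsum
      _ = Real.sqrt d * s := by
          rw [Real.sqrt_mul (le_of_lt hdR), Real.sqrt_sq hs0.le]
  have hfy : ∀ y ∈ Set.Icc lo hi, f x - K * (Real.sqrt d * s) ≤ f y := by
    intro y hy
    have h1 := hLip x hx y (hsub hy)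
    have h2 : K * Real.sqrt (∑ i, (x i - y i) ^ 2) ≤ K * (Real.sqrt d * s) :=
      mul_le_mul_of_nonneg_left (hdist y hy) hK
    have h3 := abs_le.mp h1
    linarith [h3.1, h3.2]
  have hexpc : Continuous fun y : Fin d → ℝ => Real.exp (f y) := Real.continuous_exp.comp hc
  have hint : IntegrableOn (fun y => Real.exp (f y)) (cube d) volume :=
    hexpc.continuousOn.integrableOn_compact isCompact_Icc
  have h1 : ∫ y in Set.Icc lo hi, Real.exp (f y) ≤ partZ f := by
    refine setIntegral_mono_set hint ?_ (HasSubset.Subset.eventuallyLE hsub)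
    exact Filter.Eventually.of_forall fun y => (Real.exp_pos _).le
  have h2 : Real.exp (f x - K * (Real.sqrt d * s)) * (volume (Set.Icc lo hi)).toReal
      ≤ ∫ y in Set.Icc lo hi, Real.exp (f y) := by
    refine setIntegral_ge_of_const_le_real measurableSet_Icc
      (IsCompact.measure_lt_top isCompact_Icc).ne
      (fun y hy => Real.exp_le_exp.mpr (hfy y hy)) (hint.mono_set hsub)
  have h3 : (volume (Set.Icc lo hi)).toReal = s ^ d := by
    rw [Real.volume_Icc_pi_toReal hlohi]
    have : ∀ j, hi j - lo j = s := fun j => by simp [hhi_def]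
    rw [Finset.prod_congr rfl (fun j _ => this j), Finset.prod_const, Finset.card_univ,
      Fintype.card_fin]
  have hZ_ge : Real.exp (f x - K * (Real.sqrt d * s)) * s ^ d ≤ partZ f := by
    rw [← h3]; exact le_trans h2 h1
  have hZpos : 0 < partZ f :=
    lt_of_lt_of_le (by positivity) hZ_ge
  refine ⟨?_, hZpos⟩
  -- arithmetic part
  set t : ℝ := a * s with ht_def
  have ht0 : 0 ≤ t := mul_nonneg ha hs0.le
  have ht1 : t ≤ 1 := by
    rw [ht_def, hs_def]
    rw [mul_one_div, div_le_one ha1]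
    linarith
  have hKsd : K * (Real.sqrt d * s) = (d : ℝ) * t := by
    rw [ht_def, ha_def]
    calc K * (Real.sqrt d * s) = Real.sqrt d * (K * s) := by ring
      _ = ((d:ℝ) / Real.sqrt d) * (K * s) := by rw [Real.div_sqrt]
      _ = (d:ℝ) * (K / Real.sqrt d * s) := by ring
  have hst : s * (1 + 3 * a) = 1 + 2 * t := by
    rw [ht_def, hs_def]
    field_simp
    ring
  have hexp_t : Real.exp t ≤ 1 + 2 * t := exp_le_one_add_two_mul ht0 ht1
  have hpow : Real.exp ((d:ℝ) * t) = (Real.exp t) ^ d := by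
    rw [← Real.exp_nat_mul]
  have h5 : (Real.exp t) ^ d ≤ (1 + 2 * t) ^ d :=
    pow_le_pow_left₀ (Real.exp_pos t).le hexp_t d
  have h6 : ((1 + 2 * t : ℝ)) ^ d = s ^ d * (1 + 3 * a) ^ d := by
    rw [← hst, mul_pow]
  have h7 : Real.exp (f x) = Real.exp (f x - K * (Real.sqrt d * s)) * Real.exp ((d:ℝ) * t) := by
    rw [← Real.exp_add, ← hKsd]
    ring_nf
  calc Real.exp (f x)
      = Real.exp (f x - K * (Real.sqrt d * s)) * Real.exp ((d:ℝ) * t) := h7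
    _ ≤ Real.exp (f x - K * (Real.sqrt d * s)) * (s ^ d * (1 + 3 * a) ^ d) := by
        refine mul_le_mul_of_nonneg_left ?_ (Real.exp_pos _).le
        rw [hpow, ← h6]
        exact h5
    _ = (Real.exp (f x - K * (Real.sqrt d * s)) * s ^ d) * (1 + 3 * a) ^ d := by ring
    _ ≤ partZ f * (1 + 3 * a) ^ d := by
        refine mul_le_mul_of_nonneg_right hZ_ge (pow_nonneg (by linarith) d)

end GibbsAux

open GibbsAux

/-- upper bound of Theorem 4.2: for `f ∈ C^m([0,1]^d)` with `m ≥ 1` and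
(minimal) Lipschitz constant `K` w.r.t. the Euclidean norm, the normalized Gibbs density
`p_f = e^f / Z_f` satisfies
`‖p_f‖_{C^m} ≤ 2^{m(m−1)/2} max{1, ‖f‖_{C^m}}^m (1 + 3 d^{−1/2} K)^d`. -/
theorem cmNorm_gibbs_density_le (d m : ℕ) (hd : 1 ≤ d) (hm : 1 ≤ m)
    (f : (Fin d → ℝ) → ℝ) (hf : ContDiff ℝ m f)
    (K : ℝ) (hK : 0 ≤ K)
    (hLip : ∀ x ∈ cube d, ∀ y ∈ cube d,
      |f x - f y| ≤ K * Real.sqrt (∑ i, (x i - y i) ^ 2)) :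
    CmNorm m (fun x => Real.exp (f x) / partZ f) ≤
      2 ^ (m * (m - 1) / 2) * max 1 (CmNorm m f) ^ m * (1 + 3 * K / Real.sqrt d) ^ d := by
  have hfc : Continuous f := hf.continuous
  have hform : (1 + 3 * K / Real.sqrt d) = 1 + 3 * (K / Real.sqrt d) := by
    rw [mul_div_assoc]
  set M : ℝ := max 1 (CmNorm m f) with hM_def
  have hM1 : (1:ℝ) ≤ M := le_max_left _ _
  have hRnn : (0:ℝ) ≤ 1 + 3 * (K / Real.sqrt d) := by
    have : (0:ℝ) ≤ K / Real.sqrt d := by positivity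
    linarith
  rw [CmNorm]
  refine ciSup_le ?_
  intro α
  refine ciSup_le ?_
  intro x
  -- pointwise bound
  obtain ⟨T, hT, he⟩ := pderivMulti_exp_spec hf hm α.1 α.2
  have hZb := exp_le_partZ_mul hd hfc hK hLip x.2
  have hZpos : 0 < partZ f := hZb.2
  have hdiv : pderivMulti α.1 (fun x => Real.exp (f x) / partZ f)
      = fun y => pderivMulti α.1 (fun x => Real.exp (f x)) y / partZ f :=
    pderivMulti_div_const α.1 _ _
  have hval : |pderivMulti α.1 (fun x => Real.exp (f x) / partZ f) x.1|
      = |valT f T x.1| * (Real.exp (f x.1) / partZ f) := by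
    rw [hdiv]
    simp only [he]
    rw [abs_div, abs_mul, abs_of_pos (Real.exp_pos _), abs_of_pos hZpos]
    ring
  rw [hval]
  set k : ℕ := ∑ j, α.1 j with hk_def
  have hkm : k ≤ m := α.2
  have hvb : |valT f T x.1| ≤ (k.factorial : ℝ) * M ^ k :=
    valT_bound hf x.2 hT hkm
  have hebound : Real.exp (f x.1) / partZ f ≤ (1 + 3 * (K / Real.sqrt d)) ^ d := by
    rw [div_le_iff₀ hZpos]
    calc Real.exp (f x.1) ≤ partZ f * (1 + 3 * (K / Real.sqrt d)) ^ d := hZb.1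
      _ = (1 + 3 * (K / Real.sqrt d)) ^ d * partZ f := by ring
  have hfact : (k.factorial : ℝ) ≤ (2:ℝ) ^ (m * (m - 1) / 2) := by
    have h1 : k.factorial ≤ m.factorial := Nat.factorial_le hkm
    have h2 : m.factorial ≤ 2 ^ (m * (m - 1) / 2) := factorial_le_two_pow m
    have h3 : k.factorial ≤ 2 ^ (m * (m - 1) / 2) := le_trans h1 h2
    exact_mod_cast h3
  have hMk : M ^ k ≤ M ^ m := pow_le_pow_right₀ hM1 hkm
  have hnn1 : (0:ℝ) ≤ M ^ k := le_trans zero_le_one (one_le_pow₀ hM1)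
  have hnn2 : (0:ℝ) ≤ (Real.exp (f x.1) / partZ f) := by positivity
  have hnn3 : (0:ℝ) ≤ (k.factorial : ℝ) := Nat.cast_nonneg _
  have hnn4 : (0:ℝ) ≤ (1 + 3 * (K / Real.sqrt d)) ^ d := pow_nonneg hRnn d
  rw [hform]
  calc |valT f T x.1| * (Real.exp (f x.1) / partZ f)
      ≤ ((k.factorial : ℝ) * M ^ k) * ((1 + 3 * (K / Real.sqrt d)) ^ d) := by
        refine mul_le_mul hvb hebound hnn2 (by positivity)
    _ ≤ ((2:ℝ) ^ (m * (m - 1) / 2) * M ^ m) * ((1 + 3 * (K / Real.sqrt d)) ^ d) := by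
        refine mul_le_mul_of_nonneg_right ?_ hnn4
        refine mul_le_mul hfact hMk hnn1 (by positivity)
    _ = 2 ^ (m * (m - 1) / 2) * M ^ m * (1 + 3 * (K / Real.sqrt d)) ^ d := rfl
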